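/- Write ℝⁿ = ℝᵐ × ℝ^{n−m} and regard ℝᵐ = ℝᵐ × {0} ⊂ ℝⁿ. Let M₁, M₂ be germs at 0 of submanifolds of ℝᵐ. Then M₁ and M₂ are locally equivalent under germs of real-analytic diffeomorphisms of ℝⁿ fixing 0 if and only if they are locally equivalent under germs of real-analytic diffeomorphisms of ℝᵐ fixing 0. -/

import Mathlib

open Filter Topology

/-- Local equivalence at `0` of two subsets of `ℝᵏ` under real-analytic
diffeomorphism germs fixing `0`. -/
def LocAnalyticEquiv (k : ℕ) (M₁ M₂ : Set (Fin k → ℝ)) : Prop :=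
  ∃ U : Set (Fin k → ℝ), IsOpen U ∧ 0 ∈ U ∧
    ∃ ψ : (Fin k → ℝ) → (Fin k → ℝ),
      AnalyticOnNhd ℝ ψ U ∧ ψ 0 = 0 ∧ Set.InjOn ψ U ∧
      (∀ x ∈ U, LinearMap.det ((fderiv ℝ ψ x : (Fin k → ℝ) →L[ℝ] (Fin k → ℝ)) :
        (Fin k → ℝ) →ₗ[ℝ] (Fin k → ℝ)) ≠ 0) ∧
      ψ '' (M₁ ∩ U) = M₂ ∩ ψ '' U

/-- The inclusion `ℝᵐ ≅ ℝᵐ × {0} ⊂ ℝⁿ`. -/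
def inclRm (m n : ℕ) (x : Fin m → ℝ) : Fin n → ℝ :=
  fun i => if h : (i : ℕ) < m then x ⟨i, h⟩ else 0

noncomputable section

lemma bijective_of_det_ne_zero {k : ℕ} (f : (Fin k → ℝ) →ₗ[ℝ] (Fin k → ℝ))
    (hf : LinearMap.det f ≠ 0) : Function.Bijective f := by
  have hu : IsUnit (LinearMap.toMatrix (Module.finBasis ℝ (Fin k → ℝ))
      (Module.finBasis ℝ (Fin k → ℝ)) f).det := by
    rw [LinearMap.det_toMatrix]; exact isUnit_iff_ne_zero.2 hf
  have hcoe : ((LinearEquiv.ofIsUnitDet hu : (Fin k → ℝ) →ₗ[ℝ] (Fin k → ℝ))) = f :=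
    LinearEquiv.coe_ofIsUnitDet hu
  have hb := (LinearEquiv.ofIsUnitDet hu).bijective
  have hfun : ⇑(LinearEquiv.ofIsUnitDet hu) = ⇑f := by
    funext x
    exact congrFun (congrArg (fun (g : (Fin k → ℝ) →ₗ[ℝ] Fin k → ℝ) => ⇑g) hcoe) x
  rwa [hfun] at hb

lemma det_ne_zero_of_bijective {k : ℕ} (f : (Fin k → ℝ) →ₗ[ℝ] (Fin k → ℝ))
    (hf : Function.Bijective f) : LinearMap.det f ≠ 0 := by
  have : LinearMap.det ((LinearEquiv.ofBijective f hf :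
      (Fin k → ℝ) →ₗ[ℝ] (Fin k → ℝ))) ≠ 0 :=
    (LinearEquiv.isUnit_det' _).ne_zero
  have e : ((LinearEquiv.ofBijective f hf : (Fin k → ℝ) →ₗ[ℝ] (Fin k → ℝ))) = f :=
    LinearMap.ext fun x => rfl
  rwa [e] at this

/-- Key linear algebra lemma: if `B, C` jointly injective, some shear `B + A∘C` is bijective. -/
lemma exists_shear_bijective {F E : Type*} [AddCommGroup F] [Module ℝ F]
    [FiniteDimensional ℝ F] [AddCommGroup E] [Module ℝ E]
    (B : F →ₗ[ℝ] F) (C : F →ₗ[ℝ] E)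
    (h : ∀ x, B x = 0 → C x = 0 → x = 0) :
    ∃ A : E →ₗ[ℝ] F, Function.Bijective (B + A ∘ₗ C) := by
  classical
  set K := LinearMap.ker B with hK
  have hCK : LinearMap.ker (C ∘ₗ K.subtype) = ⊥ := by
    rw [LinearMap.ker_eq_bot]
    intro ⟨x, hx⟩ ⟨y, hy⟩ hxy
    simp only [LinearMap.comp_apply, Submodule.subtype_apply] at hxy
    ext
    have hx0 : B (x - y) = 0 := by
      rw [map_sub, (LinearMap.mem_ker.mp hx), LinearMap.mem_ker.mp hy, sub_zero]
    have hc0 : C (x - y) = 0 := by rw [map_sub, hxy, sub_self]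
    have := h _ hx0 hc0
    exact sub_eq_zero.mp this
  obtain ⟨D, hD⟩ := (C ∘ₗ K.subtype).exists_leftInverse_of_injective hCK
  obtain ⟨Z, hZ⟩ := Submodule.exists_isCompl (LinearMap.range B)
  have hdim : Module.finrank ℝ K = Module.finrank ℝ Z := by
    have h1 := Submodule.finrank_add_eq_of_isCompl hZ
    have h2 := LinearMap.finrank_range_add_finrank_ker B
    rw [← hK] at h2
    omega
  obtain ⟨e⟩ := FiniteDimensional.nonempty_linearEquiv_of_finrank_eq hdim
  refine ⟨Z.subtype ∘ₗ (e : K →ₗ[ℝ] Z) ∘ₗ D, ?_⟩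
  rw [Function.Bijective]
  have hinj : Function.Injective (B + (Z.subtype ∘ₗ (e : K →ₗ[ℝ] Z) ∘ₗ D) ∘ₗ C) := by
    rw [← LinearMap.ker_eq_bot, LinearMap.ker_eq_bot']
    intro x hx
    simp only [LinearMap.add_apply, LinearMap.comp_apply] at hx
    have hmem1 : B x ∈ LinearMap.range B := LinearMap.mem_range_self _ _
    have hmem2 : (Z.subtype ((e : K →ₗ[ℝ] Z) (D (C x))) : F) ∈ Z := (e (D (C x))).2
    have hBx : B x = 0 := by
      have h1 : B x = -(Z.subtype ((e : K →ₗ[ℝ] Z) (D (C x)))) := by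
        linear_combination (norm := abel) hx
      have : B x ∈ LinearMap.range B ⊓ Z := ⟨hmem1, h1 ▸ Z.neg_mem hmem2⟩
      rw [hZ.inf_eq_bot] at this
      simpa using this
    have hxK : x ∈ K := LinearMap.mem_ker.mpr hBx
    have hDx : D (C x) = ⟨x, hxK⟩ := by
      have : C x = (C ∘ₗ K.subtype) ⟨x, hxK⟩ := rfl
      rw [this, ← LinearMap.comp_apply, hD]; rfl
    rw [hBx, zero_add] at hx
    rw [hDx] at hx
    have : (e ⟨x, hxK⟩ : F) = 0 := hx
    have he0 : e ⟨x, hxK⟩ = 0 := Subtype.ext this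
    have : (⟨x, hxK⟩ : K) = 0 := by
      apply e.injective; simpa using he0
    simpa using congrArg Subtype.val this
  exact ⟨hinj, (LinearMap.injective_iff_surjective).mp hinj⟩


def inclC (m n : ℕ) : (Fin m → ℝ) →L[ℝ] (Fin n → ℝ) :=
  ContinuousLinearMap.pi (fun i =>
    if h : (i : ℕ) < m then ContinuousLinearMap.proj ⟨i, h⟩ else 0)

def projC (m n : ℕ) (hmn : m ≤ n) : (Fin n → ℝ) →L[ℝ] (Fin m → ℝ) :=
  ContinuousLinearMap.pi (fun i => ContinuousLinearMap.proj (Fin.castLE hmn i))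

lemma inclC_eq (m n : ℕ) : ⇑(inclC m n) = inclRm m n := by
  funext x i
  simp only [inclC, inclRm, ContinuousLinearMap.pi_apply]
  split <;> simp

lemma proj_incl (m n : ℕ) (hmn : m ≤ n) (x : Fin m → ℝ) :
    projC m n hmn (inclC m n x) = x := by
  funext i
  simp only [projC, inclC, ContinuousLinearMap.pi_apply, ContinuousLinearMap.proj_apply]
  rw [dif_pos (by simpa using i.2)]
  simp

lemma proj_incl_comp (m n : ℕ) (hmn : m ≤ n) :
    (projC m n hmn).comp (inclC m n) = ContinuousLinearMap.id ℝ _ := by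
  ext x i
  have := congrFun (proj_incl m n hmn x) i
  simpa using this

lemma incl_injective (m n : ℕ) (hmn : m ≤ n) : Function.Injective (inclC m n) := by
  intro x y hxy
  have := congrArg (projC m n hmn) hxy
  rwa [proj_incl, proj_incl] at this

lemma exists_Q (m n : ℕ) (hmn : m ≤ n) (T : (Fin m → ℝ) →ₗ[ℝ] (Fin n → ℝ))
    (hT : Function.Injective T) :
    ∃ Q : (Fin n → ℝ) →L[ℝ] (Fin m → ℝ),
      (∀ x, Q (inclC m n x) = x) ∧ Function.Bijective (fun x => Q (T x)) := by
  set π := ((projC m n hmn) : (Fin n → ℝ) →ₗ[ℝ] (Fin m → ℝ)) with hπ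
  set ι := ((inclC m n) : (Fin m → ℝ) →ₗ[ℝ] (Fin n → ℝ)) with hι
  set R := (LinearMap.id : (Fin n → ℝ) →ₗ[ℝ] (Fin n → ℝ)) - ι ∘ₗ π with hR
  have hRincl : ∀ y : Fin m → ℝ, R (ι y) = 0 := by
    intro y
    simp only [hR, LinearMap.sub_apply, LinearMap.id_apply, LinearMap.comp_apply]
    have : π (ι y) = y := proj_incl m n hmn y
    rw [this, sub_self]
  have hdecomp : ∀ v : Fin n → ℝ, v = ι (π v) + R v := by
    intro v
    simp only [hR, LinearMap.sub_apply, LinearMap.id_apply, LinearMap.comp_apply]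
    abel
  obtain ⟨A, hA⟩ := exists_shear_bijective (π ∘ₗ T) (R ∘ₗ T) (by
    intro x h1 h2
    simp only [LinearMap.comp_apply] at h1 h2
    have : T x = 0 := by
      have := hdecomp (T x)
      rw [h1, h2, map_zero, add_zero] at this
      exact this
    exact hT (by rw [this, map_zero]))
  refine ⟨LinearMap.toContinuousLinearMap (π + A ∘ₗ R), ?_, ?_⟩
  · intro x
    simp only [LinearMap.coe_toContinuousLinearMap', LinearMap.add_apply, LinearMap.comp_apply]
    rw [show π (inclC m n x) = x from proj_incl m n hmn x, show R ((inclC m n) x) = 0 from hRincl x, map_zero, add_zero]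
  · have : (fun x => (LinearMap.toContinuousLinearMap (π + A ∘ₗ R)) (T x)) =
        ⇑((π ∘ₗ T) + A ∘ₗ (R ∘ₗ T)) := by
      funext x
      simp only [LinearMap.coe_toContinuousLinearMap', LinearMap.add_apply,
        LinearMap.comp_apply]
    rw [this]
    exact hA

def RcC (m n : ℕ) (hmn : m ≤ n) : (Fin n → ℝ) →L[ℝ] (Fin n → ℝ) :=
  ContinuousLinearMap.id ℝ _ - (inclC m n).comp (projC m n hmn)

section helpers
variable (m n : ℕ) (hmn : m ≤ n)

lemma Rc_incl (y : Fin m → ℝ) : RcC m n hmn (inclC m n y) = 0 := by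
  simp only [RcC, ContinuousLinearMap.sub_apply, ContinuousLinearMap.id_apply,
    ContinuousLinearMap.comp_apply, proj_incl, sub_self]

lemma proj_Rc (v : Fin n → ℝ) : projC m n hmn (RcC m n hmn v) = 0 := by
  simp only [RcC, map_sub, ContinuousLinearMap.sub_apply, ContinuousLinearMap.id_apply,
    ContinuousLinearMap.comp_apply, proj_incl, sub_self]

lemma decompC (v : Fin n → ℝ) : inclC m n (projC m n hmn v) + RcC m n hmn v = v := by
  simp only [RcC, ContinuousLinearMap.sub_apply, ContinuousLinearMap.id_apply,
    ContinuousLinearMap.comp_apply]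
  abel

lemma Rc_Rc (v : Fin n → ℝ) : RcC m n hmn (RcC m n hmn v) = RcC m n hmn v := by
  have := decompC m n hmn (RcC m n hmn v)
  rw [proj_Rc, map_zero, zero_add] at this
  exact this
end helpers

lemma mpr_dir (m n : ℕ) (hmn : m ≤ n) (M₁ M₂ : Set (Fin m → ℝ))
    (h : LocAnalyticEquiv m M₁ M₂) :
    LocAnalyticEquiv n (inclRm m n '' M₁) (inclRm m n '' M₂) := by
  obtain ⟨U, hUo, hU0, φ, hφa, hφ0, hφi, hφd, hφim⟩ := h
  rw [← inclC_eq]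
  set π := projC m n hmn
  set ι := inclC m n
  set Rc := RcC m n hmn
  set Ψ : (Fin n → ℝ) → (Fin n → ℝ) := fun x => ι (φ (π x)) + Rc x with hΨdef
  set U' : Set (Fin n → ℝ) := π ⁻¹' U with hU'def
  have pI : ∀ y, π (ι y) = y := proj_incl m n hmn
  have rI : ∀ y, Rc (ι y) = 0 := Rc_incl m n hmn
  have pR : ∀ v, π (Rc v) = 0 := proj_Rc m n hmn
  have rR : ∀ v, Rc (Rc v) = Rc v := Rc_Rc m n hmn
  have dec : ∀ v, ι (π v) + Rc v = v := decompC m n hmn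
  have hπΨ : ∀ v, π (Ψ v) = φ (π v) := by
    intro v
    simp only [hΨdef, map_add, pI, pR, add_zero]
  have hRcΨ : ∀ v, Rc (Ψ v) = Rc v := by
    intro v
    simp only [hΨdef, map_add, rI, rR, zero_add]
  refine ⟨U', hUo.preimage π.continuous, by simpa [hU'def] using hU0, Ψ, ?_, ?_, ?_, ?_, ?_⟩
  · -- analytic
    intro x hx
    exact (((ι.analyticAt _).comp ((hφa _ hx).comp (π.analyticAt x))).add
      ((Rc.analyticAt x)))
  · simp [hΨdef, hφ0]
  · -- InjOn
    intro x hx y hy hxy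
    have h1 : φ (π x) = φ (π y) := by rw [← hπΨ x, ← hπΨ y, hxy]
    have h2 : π x = π y := hφi hx hy h1
    have h3 : Rc x = Rc y := by rw [← hRcΨ x, ← hRcΨ y, hxy]
    calc x = ι (π x) + Rc x := (decompC m n hmn x).symm
    _ = ι (π y) + Rc y := by rw [h2, h3]
    _ = y := decompC m n hmn y
  · -- det
    intro x hx
    have hφdiff : HasFDerivAt φ (fderiv ℝ φ (π x)) (π x) :=
      ((hφa _ hx).differentiableAt).hasFDerivAt
    set f' := fderiv ℝ φ (π x) with hf'
    have hD : HasFDerivAt Ψ (ι.comp (f'.comp π) + Rc) x := by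
      exact (ι.hasFDerivAt.comp x (hφdiff.comp x (π.hasFDerivAt))).add Rc.hasFDerivAt
    rw [hD.fderiv]
    apply det_ne_zero_of_bijective
    have hbij : Function.Bijective f' := by
      have := bijective_of_det_ne_zero (f' : (Fin m → ℝ) →ₗ[ℝ] (Fin m → ℝ)) (hφd _ hx)
      exact this
    set e := LinearEquiv.ofBijective (f' : (Fin m → ℝ) →ₗ[ℝ] (Fin m → ℝ)) hbij with he
    set D := ι.comp (f'.comp π) + Rc with hDdef
    have hDapp : ∀ v, (D : (Fin n → ℝ) →ₗ[ℝ] (Fin n → ℝ)) v = ι (f' (π v)) + Rc v := fun v => rfl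
    have hecoe : ∀ a, e a = f' a := fun a => rfl
    refine Function.bijective_iff_has_inverse.mpr
      ⟨fun v => ι (e.symm (π v)) + Rc v, ?_, ?_⟩
    · intro v
      have hsy : e.symm (f' (π v)) = π v := by
        rw [← hecoe]; exact e.symm_apply_apply _
      simp only [hDapp, map_add, pI, pR, add_zero, rI, rR, zero_add, map_zero, hsy]
      exact dec v
    · intro v
      have hsy : ∀ a, f' (e.symm a) = a := by
        intro a; rw [← hecoe]; exact e.apply_symm_apply _
      simp only [hDapp, map_add, pI, pR, add_zero, rI, rR, zero_add, map_zero, hsy]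
      exact dec v
  · -- image
    ext z
    constructor
    · rintro ⟨w, ⟨⟨x, hxM, rfl⟩, hwU⟩, rfl⟩
      have hπ : π (ι x) = x := proj_incl m n hmn x
      have hxU : x ∈ U := by rwa [hU'def, Set.mem_preimage, hπ] at hwU
      have hΨw : Ψ (ι x) = ι (φ x) := by
        simp only [hΨdef, hπ, rI, add_zero]
      have hφxM : φ x ∈ M₂ := by
        have : φ x ∈ φ '' (M₁ ∩ U) := ⟨x, ⟨hxM, hxU⟩, rfl⟩
        rw [hφim] at this
        exact this.1
      exact ⟨⟨φ x, hφxM, hΨw.symm⟩, ⟨ι x, hwU, rfl⟩⟩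
    · rintro ⟨⟨y, hyM, hyz⟩, ⟨w, hwU, rfl⟩⟩
      have hRcw : Rc w = 0 := by
        have h1 : Rc (Ψ w) = Rc w := hRcΨ w
        rw [← hyz, rI] at h1
        exact h1.symm
      have hyφ : y = φ (π w) := by
        have h1 : π (Ψ w) = φ (π w) := hπΨ w
        rw [← hyz, pI] at h1
        exact h1
      have hπwU : π w ∈ U := hwU
      have : y ∈ M₂ ∩ φ '' U := ⟨hyM, π w, hπwU, hyφ.symm⟩
      rw [← hφim] at this
      obtain ⟨u, ⟨huM, huU⟩, huy⟩ := this
      have hu : u = π w := hφi huU hπwU (by rw [huy, hyφ])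
      have hwι : w = ι (π w) := by
        have := decompC m n hmn w
        rw [hRcw, add_zero] at this
        exact this.symm
      exact ⟨w, ⟨⟨π w, hu ▸ huM, hwι.symm⟩, hwU⟩, rfl⟩

lemma mp_dir (m n : ℕ) (hmn : m ≤ n) (M₁ M₂ : Set (Fin m → ℝ))
    (h : LocAnalyticEquiv n (inclRm m n '' M₁) (inclRm m n '' M₂)) :
    LocAnalyticEquiv m M₁ M₂ := by
  obtain ⟨U, hUo, hU0, ψ, hψa, hψ0, hψi, hψd, hψim⟩ := h
  rw [← inclC_eq] at hψim
  set ι := inclC m n with hιdef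
  set π := projC m n hmn with hπdef
  have hι0 : ι (0 : Fin m → ℝ) = 0 := map_zero ι
  -- the derivative of ψ at 0 and the projection Q
  set L : (Fin n → ℝ) →L[ℝ] (Fin n → ℝ) := fderiv ℝ ψ 0 with hLdef
  have hLbij : Function.Bijective ⇑(L : (Fin n → ℝ) →ₗ[ℝ] (Fin n → ℝ)) :=
    bijective_of_det_ne_zero _ (hψd 0 hU0)
  have hTinj : Function.Injective
      ((L : (Fin n → ℝ) →ₗ[ℝ] (Fin n → ℝ)) ∘ₗ (ι : (Fin m → ℝ) →ₗ[ℝ] (Fin n → ℝ))) := by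
    intro a b hab
    exact incl_injective m n hmn (hLbij.injective hab)
  obtain ⟨Q, hQι, hQT⟩ := exists_Q m n hmn _ hTinj
  -- the candidate map φ
  set φ : (Fin m → ℝ) → (Fin m → ℝ) := fun x => Q (ψ (ι x)) with hφdef
  set U₀ : Set (Fin m → ℝ) := ι ⁻¹' U with hU₀def
  have hU₀o : IsOpen U₀ := hUo.preimage ι.continuous
  have hU₀0 : (0 : Fin m → ℝ) ∈ U₀ := by
    simp only [hU₀def, Set.mem_preimage, hι0]; exact hU0
  have hφa : AnalyticOnNhd ℝ φ U₀ := by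
    intro x hx
    exact (Q.analyticAt _).comp ((hψa _ hx).comp (ι.analyticAt x))
  have hφ0 : φ 0 = 0 := by simp only [hφdef, hι0, hψ0, map_zero]
  -- derivative of φ
  have hφD : ∀ x ∈ U₀, HasFDerivAt φ (Q.comp ((fderiv ℝ ψ (ι x)).comp ι)) x := by
    intro x hx
    exact Q.hasFDerivAt.comp x (((hψa _ hx).differentiableAt.hasFDerivAt).comp x ι.hasFDerivAt)
  have hφd0bij : Function.Bijective ⇑(fderiv ℝ φ 0) := by
    have h1 : fderiv ℝ φ 0 = Q.comp ((fderiv ℝ ψ (ι 0)).comp ι) := by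
      have := (hφD 0 hU₀0).fderiv
      rw [this]
    have h2 : ⇑(Q.comp ((fderiv ℝ ψ (ι 0)).comp ι)) =
        (fun x => Q (((L : (Fin n → ℝ) →ₗ[ℝ] (Fin n → ℝ)) ∘ₗ
          (ι : (Fin m → ℝ) →ₗ[ℝ] (Fin n → ℝ))) x)) := by
      funext x
      simp only [ContinuousLinearMap.comp_apply, LinearMap.comp_apply,
        ContinuousLinearMap.coe_coe, LinearMap.coe_coe]
      rw [hι0]
    rw [h1, h2]
    exact hQT
  -- determinant of fderiv φ is nonzero near 0
  have hdetcont : ContinuousOn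
      (fun x => LinearMap.det ((fderiv ℝ φ x : (Fin m → ℝ) →L[ℝ] (Fin m → ℝ)) :
        (Fin m → ℝ) →ₗ[ℝ] (Fin m → ℝ))) U₀ := by
    have h1 : ContinuousOn (fderiv ℝ φ) U₀ := (hφa.fderiv).continuousOn
    exact ContinuousLinearMap.continuous_det.comp_continuousOn h1
  set S : Set (Fin m → ℝ) := U₀ ∩ (fun x => LinearMap.det
      ((fderiv ℝ φ x : (Fin m → ℝ) →L[ℝ] (Fin m → ℝ)) :
        (Fin m → ℝ) →ₗ[ℝ] (Fin m → ℝ))) ⁻¹' {(0:ℝ)}ᶜ with hSdef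
  have hSo : IsOpen S := hdetcont.isOpen_inter_preimage hU₀o isOpen_compl_singleton
  have hS0 : (0 : Fin m → ℝ) ∈ S := by
    refine ⟨hU₀0, ?_⟩
    simp only [Set.mem_preimage, Set.mem_compl_iff, Set.mem_singleton_iff]
    exact det_ne_zero_of_bijective _ hφd0bij
  -- inverse function theorem for φ at 0
  have hφan0 : AnalyticAt ℝ φ 0 := hφa 0 hU₀0
  have hφdet0 : (fderiv ℝ φ 0).det ≠ 0 := det_ne_zero_of_bijective _ hφd0bij
  set eφ : (Fin m → ℝ) ≃L[ℝ] (Fin m → ℝ) :=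
    (fderiv ℝ φ 0).toContinuousLinearEquivOfDetNeZero hφdet0 with heφ
  have hsφ : HasStrictFDerivAt φ (eφ : (Fin m → ℝ) →L[ℝ] (Fin m → ℝ)) 0 := by
    have h1 := hφan0.hasStrictFDerivAt
    have h2 : (eφ : (Fin m → ℝ) →L[ℝ] (Fin m → ℝ)) = fderiv ℝ φ 0 :=
      ContinuousLinearMap.coe_toContinuousLinearEquivOfDetNeZero _ _
    rwa [h2]
  set g := hsφ.toOpenPartialHomeomorph φ with hgdef
  have hg0 : (0 : Fin m → ℝ) ∈ g.source := hsφ.mem_toOpenPartialHomeomorph_source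
  have hgcoe : ⇑g = φ := hsφ.toOpenPartialHomeomorph_coe
  -- inverse function theorem for ψ at 0
  have hψan0 : AnalyticAt ℝ ψ 0 := hψa 0 hU0
  have hψdet0 : (fderiv ℝ ψ 0).det ≠ 0 := hψd 0 hU0
  set eψ : (Fin n → ℝ) ≃L[ℝ] (Fin n → ℝ) :=
    (fderiv ℝ ψ 0).toContinuousLinearEquivOfDetNeZero hψdet0 with heψ
  have hsψ : HasStrictFDerivAt ψ (eψ : (Fin n → ℝ) →L[ℝ] (Fin n → ℝ)) 0 := by
    have h1 := hψan0.hasStrictFDerivAt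
    have h2 : (eψ : (Fin n → ℝ) →L[ℝ] (Fin n → ℝ)) = fderiv ℝ ψ 0 :=
      ContinuousLinearMap.coe_toContinuousLinearEquivOfDetNeZero _ _
    rwa [h2]
  set P := hsψ.toOpenPartialHomeomorph ψ with hPdef
  have hP0 : (0 : Fin n → ℝ) ∈ P.source := hsψ.mem_toOpenPartialHomeomorph_source
  have hPcoe : ⇑P = ψ := hsψ.toOpenPartialHomeomorph_coe
  -- the nested neighborhoods
  set U₁ : Set (Fin m → ℝ) := S ∩ g.source with hU₁def
  have hU₁o : IsOpen U₁ := hSo.inter g.open_source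
  have hU₁0 : (0 : Fin m → ℝ) ∈ U₁ := ⟨hS0, hg0⟩
  set V' : Set (Fin n → ℝ) := (U ∩ P.source) ∩ π ⁻¹' U₁ with hV'def
  have hV'o : IsOpen V' := ((hUo.inter P.open_source).inter
    (hU₁o.preimage π.continuous))
  have hV'0 : (0 : Fin n → ℝ) ∈ V' := by
    refine ⟨⟨hU0, hP0⟩, ?_⟩
    simp only [Set.mem_preimage, map_zero]
    exact hU₁0
  set W' : Set (Fin n → ℝ) := ψ '' V' with hW'def
  have hW'o : IsOpen W' := by
    have := P.isOpen_image_of_subset_source hV'o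
      (fun x hx => hx.1.2)
    rwa [hPcoe] at this
  have hW'0 : (0 : Fin n → ℝ) ∈ W' := ⟨0, hV'0, hψ0⟩
  -- final neighborhood
  set Uf : Set (Fin m → ℝ) := (U₀ ∩ (fun x => ι (φ x)) ⁻¹' W') ∩ U₁ ∩ ι ⁻¹' V' with hUfdef
  have hUfo : IsOpen Uf := by
    have hc : ContinuousOn (fun x => ι (φ x)) U₀ :=
      ι.continuous.comp_continuousOn hφa.continuousOn
    exact ((hc.isOpen_inter_preimage hU₀o hW'o).inter hU₁o).inter
      (hV'o.preimage ι.continuous)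
  have hUf0 : (0 : Fin m → ℝ) ∈ Uf := by
    refine ⟨⟨⟨hU₀0, ?_⟩, hU₁0⟩, ?_⟩
    · simp only [Set.mem_preimage, hφ0, hι0]; exact hW'0
    · simp only [Set.mem_preimage, hι0]; exact hV'0
  have hUfU₀ : Uf ⊆ U₀ := fun x hx => hx.1.1.1
  have hUfg : Uf ⊆ g.source := fun x hx => hx.1.2.2
  have hφinj : Set.InjOn φ Uf := by
    have := g.injOn
    rw [hgcoe] at this
    exact this.mono hUfg
  refine ⟨Uf, hUfo, hUf0, φ, fun x hx => hφa x (hUfU₀ hx), hφ0, hφinj, ?_, ?_⟩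
  · intro x hx
    exact hx.1.2.1.2
  · -- image equality
    ext y
    constructor
    · rintro ⟨x, ⟨hxM, hxUf⟩, rfl⟩
      have hιxU : ι x ∈ U := hUfU₀ hxUf
      have h1 : ψ (ι x) ∈ ⇑ι '' M₂ ∩ ψ '' U := by
        rw [← hψim]
        exact ⟨ι x, ⟨⟨x, hxM, rfl⟩, hιxU⟩, rfl⟩
      obtain ⟨⟨z, hzM, hz⟩, -⟩ := h1
      have : φ x = z := by
        rw [hφdef]
        simp only
        rw [← hz, hQι]
      rw [this]
      exact ⟨hzM, x, hxUf, ‹φ x = z›⟩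
    · rintro ⟨hyM, x, hxUf, rfl⟩
      -- φ x ∈ M₂, want x ∈ M₁
      have hιφx : ι (φ x) ∈ W' := hxUf.1.1.2
      obtain ⟨z', hz'V, hz'⟩ := hιφx
      have hιyU : ι (φ x) ∈ ⇑ι '' M₂ ∩ ψ '' U := by
        refine ⟨⟨φ x, hyM, rfl⟩, z', hz'V.1.1, hz'⟩
      rw [← hψim] at hιyU
      obtain ⟨z, ⟨⟨w, hwM, hwz⟩, hzU⟩, hzψ⟩ := hιyU
      have hzz' : z = z' := hψi hzU hz'V.1.1 (by rw [hzψ, hz'])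
      have hwU₁ : w ∈ U₁ := by
        have : z' ∈ π ⁻¹' U₁ := hz'V.2
        rw [← hzz', ← hwz] at this
        have hw' : π (ι w) = w := proj_incl m n hmn w
        rw [Set.mem_preimage, hw'] at this
        exact this
      have hφw : φ w = φ x := by
        rw [hφdef]
        simp only
        rw [hwz, hzψ, hQι]
      have hxU₁ : x ∈ U₁ := hxUf.1.2
      have hginj := g.injOn
      rw [hgcoe] at hginj
      have hxw : w = x := hginj hwU₁.2 hxU₁.2 hφw
      exact ⟨x, ⟨hxw ▸ hwM, hxUf⟩, rfl⟩

end

/-- Germs at 0 of submanifolds of `ℝᵐ ⊂ ℝⁿ` are locally equivalent under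
real-analytic diffeomorphism germs of `ℝⁿ` fixing 0 iff they are equivalent under
real-analytic diffeomorphism germs of `ℝᵐ` fixing 0. -/
theorem locEquiv_ambient_iff_subspace
    (m n : ℕ) (hmn : m ≤ n)
    (M₁ M₂ : Set (Fin m → ℝ)) (h01 : 0 ∈ M₁) (h02 : 0 ∈ M₂) :
    LocAnalyticEquiv n (inclRm m n '' M₁) (inclRm m n '' M₂) ↔
      LocAnalyticEquiv m M₁ M₂ :=
  ⟨mp_dir m n hmn M₁ M₂, mpr_dir m n hmn M₁ M₂⟩
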